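/- Let P = (x, α√3) with 0 < x < 1/2 and (1+x)/3 < α < 1 - x. Then the three points L₀ = (-x, √3(x²-1)/(3α)), L₊ = (2 + x, √3(1-x²)/(3α)), and L₋ = (-2 + x, √3(1-x²)/(3α)) are all at the same Euclidean distance from P. -/

import Mathlib

open RealInnerProductSpace

theorem stmt_9 (x α : ℝ) (hx0 : 0 < x) (hx : x < 1/2)
    (hα0 : (1 + x)/3 < α) (hα1 : α < 1 - x) :
    let P : EuclideanSpace ℝ (Fin 2) := !₂[x, α * Real.sqrt 3]
    let L₀ : EuclideanSpace ℝ (Fin 2) := !₂[-x, Real.sqrt 3 * ((x^2 - 1) / (3 * α))]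
    let Lplus : EuclideanSpace ℝ (Fin 2) := !₂[2 + x, Real.sqrt 3 * ((1 - x^2) / (3 * α))]
    let Lminus : EuclideanSpace ℝ (Fin 2) := !₂[-2 + x, Real.sqrt 3 * ((1 - x^2) / (3 * α))]
    dist P L₀ = dist P Lplus ∧ dist P L₀ = dist P Lminus := by
  intro P L₀ Lplus Lminus
  have hα : α ≠ 0 := by nlinarith
  have h3 : Real.sqrt 3 * Real.sqrt 3 = 3 := by
    exact Real.mul_self_sqrt (by norm_num)
  have key : ∀ a b : EuclideanSpace ℝ (Fin 2),
      dist a b = Real.sqrt ((a 0 - b 0)^2 + (a 1 - b 1)^2) := by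
    intro a b
    rw [EuclideanSpace.dist_eq, Fin.sum_univ_two]
    simp [Real.dist_eq, sq_abs]
  constructor <;>
  · rw [key, key]
    congr 1
    simp only [P, L₀, Lplus, Lminus, WithLp.ofLp_toLp, Matrix.cons_val_zero, Matrix.cons_val_one, Matrix.head_cons]
    field_simp
    nlinarith [h3, sq_nonneg α, sq_nonneg x]
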